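/- Let H be an invertible n×n complex Hermitian matrix, let γ be an n×n matrix with real entries satisfying γ† = γ and γ² = 1, and let T be an n×n unitary matrix satisfying T H T⁻¹ = H* (time-reversal symmetry) and T γ = γ T. Then the operator V = γ · sgn(H) satisfies T V T⁻¹ = V*, where M* denotes entrywise complex conjugation. -/

import Mathlib

open Matrix
open scoped ComplexOrder

/-- The square root of a positive semidefinite matrix, as `Matrix.PosSemidef.sqrt` was defined
in the older Mathlib (that definition has since been removed). -/
noncomputable def Matrix.PosSemidef.sqrt {n : ℕ} {A : Matrix (Fin n) (Fin n) ℂ}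
    (hA : A.PosSemidef) : Matrix (Fin n) (Fin n) ℂ :=
  (hA.1.eigenvectorUnitary : Matrix (Fin n) (Fin n) ℂ) *
    diagonal ((↑) ∘ (√·) ∘ hA.1.eigenvalues) *
    (star hA.1.eigenvectorUnitary : Matrix (Fin n) (Fin n) ℂ)
/-- The matrix sign `sgn H = H * (√(H²))⁻¹` of a Hermitian matrix, where `√(H²)` is the
positive semidefinite square root of `H²`. -/
noncomputable def matrixSign {n : ℕ} (H : Matrix (Fin n) (Fin n) ℂ) (hH : H.IsHermitian) :
    Matrix (Fin n) (Fin n) ℂ :=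
  H * ((show (H * H).PosSemidef by
      simpa [hH.eq] using Matrix.posSemidef_conjTranspose_mul_self H).sqrt)⁻¹

section
open scoped MatrixOrder
private lemma psd_sqrt_eq_cfc {n : ℕ} {A : Matrix (Fin n) (Fin n) ℂ} (hA : A.PosSemidef) :
    hA.sqrt = CFC.sqrt A := by
  rw [CFC.sqrt_eq_cfc, cfc_nnreal_eq_real _ A hA.nonneg, hA.1.cfc_eq]
  simp only [Matrix.IsHermitian.cfc, Matrix.PosSemidef.sqrt, Unitary.conjStarAlgAut_apply]
  congr 3
  ext i
  simp
  rw [max_eq_left (hA.eigenvalues_nonneg i)]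
private lemma psd_sqrt_posSemidef {n : ℕ} {A : Matrix (Fin n) (Fin n) ℂ} (hA : A.PosSemidef) :
    hA.sqrt.PosSemidef := by
  rw [psd_sqrt_eq_cfc]; exact (CFC.sqrt_nonneg A).posSemidef
private lemma psd_sqrt_mul_self {n : ℕ} {A : Matrix (Fin n) (Fin n) ℂ} (hA : A.PosSemidef) :
    hA.sqrt * hA.sqrt = A := by
  rw [psd_sqrt_eq_cfc]; exact CFC.sqrt_mul_sqrt_self A hA.nonneg
private lemma psd_eq_sqrt_of_sq_eq {n : ℕ} {A : Matrix (Fin n) (Fin n) ℂ} (hA : A.PosSemidef)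
    (B : Matrix (Fin n) (Fin n) ℂ) (hB : B.PosSemidef) (hAB : A ^ 2 = B) : A = hB.sqrt := by
  rw [psd_sqrt_eq_cfc]
  exact (CFC.sqrt_unique (by rw [← sq]; exact hAB) hA.nonneg).symm
end

private lemma unitary_conj_mul {n : ℕ} {T : Matrix (Fin n) (Fin n) ℂ} (hT1 : Tᴴ * T = 1)
    (A B : Matrix (Fin n) (Fin n) ℂ) : (T * A * Tᴴ) * (T * B * Tᴴ) = T * (A * B) * Tᴴ := by
  simp only [Matrix.mul_assoc]
  rw [← Matrix.mul_assoc Tᴴ T, hT1, Matrix.one_mul]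

private lemma map_conj_eq {n : ℕ} (M : Matrix (Fin n) (Fin n) ℂ) :
    M.map (starRingEnd ℂ) = (Mᴴ)ᵀ := by
  ext i j; simp

theorem stmt_11 {n : ℕ} (H : Matrix (Fin n) (Fin n) ℂ)
    (hH : H.IsHermitian) (hHinv : IsUnit H.det)
    (γ : Matrix (Fin n) (Fin n) ℂ) (hγreal : ∀ i j, (γ i j).im = 0)
    (hγherm : γᴴ = γ) (hγ2 : γ * γ = 1)
    (T : Matrix (Fin n) (Fin n) ℂ) (hT : Tᴴ * T = 1 ∧ T * Tᴴ = 1)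
    (hTH : T * H * T⁻¹ = H.map (starRingEnd ℂ)) (hTγ : T * γ = γ * T)
    (V : Matrix (Fin n) (Fin n) ℂ) (hV : V = γ * matrixSign H hH) :
    T * V * T⁻¹ = V.map (starRingEnd ℂ) := by
  set c := starRingEnd ℂ
  have hTinv : T⁻¹ = Tᴴ := inv_eq_right_inv hT.2
  have hTHinv : (Tᴴ)⁻¹ = T := inv_eq_right_inv hT.1
  have h2 : (H * H).PosSemidef := by
    simpa [hH.eq] using Matrix.posSemidef_conjTranspose_mul_self H
  set S := h2.sqrt with hSdef
  have hS : S.PosSemidef := psd_sqrt_posSemidef h2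
  have hSsq : S * S = H * H := psd_sqrt_mul_self h2
  rw [hTinv] at hTH ⊢
  have hHHc : T * (H * H) * Tᴴ = (H * H).map c := by
    rw [← unitary_conj_mul hT.1 H H, hTH, Matrix.map_mul]
  have h2c : ((H * H).map c).PosSemidef := by
    rw [map_conj_eq, Matrix.conjTranspose_mul, hH.eq]
    exact h2.transpose
  have hB : (T * S * Tᴴ).PosSemidef := hS.mul_mul_conjTranspose_same T
  have hBsq : (T * S * Tᴴ) ^ 2 = (H * H).map c := by
    rw [pow_two, unitary_conj_mul hT.1, hSsq, hHHc]
  have hSmapc : S.map c = Sᵀ := by rw [map_conj_eq, hS.1.eq]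
  have hC : (S.map c).PosSemidef := by rw [hSmapc]; exact hS.transpose
  have hCsq : (S.map c) ^ 2 = (H * H).map c := by
    rw [pow_two, ← Matrix.map_mul, hSsq]
  have key : T * S * Tᴴ = S.map c := by
    rw [psd_eq_sqrt_of_sq_eq hB _ h2c hBsq, psd_eq_sqrt_of_sq_eq hC _ h2c hCsq]
  have keyinv : T * S⁻¹ * Tᴴ = (S⁻¹).map c := by
    have h1 : (T * S * Tᴴ)⁻¹ = T * S⁻¹ * Tᴴ := by
      rw [Matrix.mul_inv_rev, Matrix.mul_inv_rev, hTHinv, hTinv]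
      simp only [Matrix.mul_assoc]
    have h2' : (S.map c)⁻¹ = (S⁻¹).map c := by
      rw [map_conj_eq, map_conj_eq, Matrix.conjTranspose_nonsing_inv,
        Matrix.transpose_nonsing_inv]
    rw [← h1, key, h2']
  have hγc : γ.map c = γ := by
    ext i j
    simp only [Matrix.map_apply]
    exact Complex.ext rfl (by simp [c, hγreal i j])
  have hSign : matrixSign H hH = H * S⁻¹ := rfl
  rw [hV, hSign]
  calc T * (γ * (H * S⁻¹)) * Tᴴ
      = γ * (T * (H * S⁻¹) * Tᴴ) := by
        rw [← Matrix.mul_assoc T γ, hTγ]; simp only [Matrix.mul_assoc]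
    _ = γ * ((T * H * Tᴴ) * (T * S⁻¹ * Tᴴ)) := by rw [unitary_conj_mul hT.1]
    _ = γ * (H.map c * (S⁻¹).map c) := by rw [hTH, keyinv]
    _ = (γ * (H * S⁻¹)).map c := by rw [Matrix.map_mul, Matrix.map_mul, hγc]
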